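/- Let n ≥ 2, let F be a field of characteristic 0, and let f_1,…,f_{n-1} ∈ F[x_1,…,x_n]. For each i ∈ {1,…,n} let M_i denote the determinant of the (n−1)×(n−1) matrix obtained from the n×(n−1) Jacobian matrix (∂f_l/∂x_k)_{k=1,…,n; l=1,…,n-1} by deleting the i-th row. Then Σ_{i=1}^n (−1)^i ∂M_i/∂x_i = 0. (Equivalently: the vector field ad(f_1∧⋯∧f_{n-1}) = Σ_i (−1)^{n+i} M_i ∂/∂x_i has zero divergence, so inner derivations of the n-Lie algebra S^n lie in the divergence-zero Lie algebra S_n.) -/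

import Mathlib

open MvPolynomial Equiv Finset

section aux
variable {R : Type*} [CommRing R] {σ : Type*}

private lemma pderiv_pderiv_comm (i j : σ) (p : MvPolynomial σ R) :
    pderiv i (pderiv j p) = pderiv j (pderiv i p) := by
  classical
  induction p using MvPolynomial.induction_on' with
  | add p q hp hq => simp [hp, hq]
  | monomial s a =>
    rcases eq_or_ne i j with rfl | hij
    · rfl
    · simp only [pderiv_monomial]
      have h1 : ((s - Finsupp.single j 1 : σ →₀ ℕ)) i = s i := by
        simp [Finsupp.sub_apply, Finsupp.single_apply, hij.symm]
      have h2 : ((s - Finsupp.single i 1 : σ →₀ ℕ)) j = s j := by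
        simp [Finsupp.sub_apply, Finsupp.single_apply, hij]
      have h3 : (s - Finsupp.single j 1 - Finsupp.single i 1 : σ →₀ ℕ)
          = s - Finsupp.single i 1 - Finsupp.single j 1 := by
        ext t; simp [Finsupp.sub_apply]; omega
      rw [h1, h2, h3]
      ring_nf

private lemma pderiv_finset_prod {ι : Type*} [DecidableEq ι] (i : σ)
    (s : Finset ι) (g : ι → MvPolynomial σ R) :
    pderiv i (∏ l ∈ s, g l) = ∑ l0 ∈ s, pderiv i (g l0) * ∏ l ∈ s.erase l0, g l := by
  classical
  induction s using Finset.induction_on with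
  | empty => simp
  | @insert a s ha ih =>
    rw [Finset.prod_insert ha, pderiv_mul, ih, Finset.sum_insert ha, Finset.erase_insert ha,
      Finset.mul_sum]
    congr 1
    refine Finset.sum_congr rfl fun x hx => ?_
    rw [Finset.erase_insert_of_ne (by rintro rfl; exact ha hx),
      Finset.prod_insert (fun h => ha (Finset.mem_of_mem_erase h))]
    ring
end aux

open Equiv.Perm in
set_option maxHeartbeats 1000000 in
private lemma key (F : Type*) [Field F] [CharZero F] (m : ℕ)
    (f : Fin (m + 1) → MvPolynomial (Fin (m + 1 + 1)) F) :
    ∑ i : Fin (m + 1 + 1), (-1 : MvPolynomial (Fin (m + 1 + 1)) F) ^ ((i : ℕ) + 1) *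
      pderiv i (Matrix.det (Matrix.of fun (k l : Fin (m + 1)) =>
        pderiv (i.succAbove k) (f l))) = 0 := by
  classical
  set G : Perm (Fin (m + 1 + 1)) → MvPolynomial (Fin (m + 1 + 1)) F := fun π =>
    ((sign π : ℤ) : MvPolynomial (Fin (m + 1 + 1)) F) * ∑ l0 : Fin (m + 1),
      pderiv (π 0) (pderiv (π l0.succ) (f l0)) *
        ∏ l ∈ Finset.univ.erase l0, pderiv (π l.succ) (f l) with hGdef
  -- Claim B : total sum of G vanishes
  have hB : ∑ π : Perm (Fin (m + 1 + 1)), G π = 0 := by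
    have hsum : ∑ π : Perm (Fin (m + 1 + 1)), G π
        = ∑ l0 : Fin (m + 1), ∑ π : Perm (Fin (m + 1 + 1)),
          ((sign π : ℤ) : MvPolynomial (Fin (m + 1 + 1)) F) * (pderiv (π 0) (pderiv (π l0.succ) (f l0)) *
            ∏ l ∈ Finset.univ.erase l0, pderiv (π l.succ) (f l)) := by
      rw [Finset.sum_comm]
      exact Finset.sum_congr rfl fun π _ => Finset.mul_sum _ _ _
    rw [hsum]
    refine Finset.sum_eq_zero fun l0 _ => ?_
    set c : Perm (Fin (m + 1 + 1)) := Equiv.swap 0 l0.succ with hc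
    set H : Perm (Fin (m + 1 + 1)) → MvPolynomial (Fin (m + 1 + 1)) F := fun π =>
      ((sign π : ℤ) : MvPolynomial (Fin (m + 1 + 1)) F) * (pderiv (π 0) (pderiv (π l0.succ) (f l0)) *
        ∏ l ∈ Finset.univ.erase l0, pderiv (π l.succ) (f l)) with hHdef
    have h2 : ∀ π, H (π * c) = - H π := by
      intro π
      have hc0 : (π * c) 0 = π l0.succ := by
        simp [hc, Equiv.Perm.mul_apply]
      have hcs : (π * c) l0.succ = π 0 := by
        simp [hc, Equiv.Perm.mul_apply]
      have hsign : ((sign (π * c) : ℤ) : MvPolynomial (Fin (m + 1 + 1)) F) = - ((sign π : ℤ) : MvPolynomial (Fin (m + 1 + 1)) F) := by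
        rw [map_mul, hc, Equiv.Perm.sign_swap (Fin.succ_ne_zero l0).symm]
        push_cast
        ring
      have hprod : ∏ l ∈ Finset.univ.erase l0, pderiv ((π * c) l.succ) (f l)
          = ∏ l ∈ Finset.univ.erase l0, pderiv (π l.succ) (f l) := by
        refine Finset.prod_congr rfl fun l hl => ?_
        have hne : l ≠ l0 := (Finset.mem_erase.mp hl).1
        have : c l.succ = l.succ :=
          Equiv.swap_apply_of_ne_of_ne (Fin.succ_ne_zero l)
            (fun h => hne (Fin.succ_injective _ h))
        rw [Equiv.Perm.mul_apply, this]
      rw [hHdef]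
      simp only [hc0, hcs, hsign, hprod]
      rw [pderiv_pderiv_comm]
      ring
    have h1 : ∑ π : Perm (Fin (m + 1 + 1)), H π
        = ∑ π : Perm (Fin (m + 1 + 1)), H (π * c) :=
      (Fintype.sum_equiv (Equiv.mulRight c) _ _ fun π => rfl).symm
    have h3 : ∑ π : Perm (Fin (m + 1 + 1)), H π
        = - ∑ π : Perm (Fin (m + 1 + 1)), H π :=
      calc ∑ π : Perm (Fin (m + 1 + 1)), H π
          = ∑ π : Perm (Fin (m + 1 + 1)), H (π * c) := h1
        _ = ∑ π : Perm (Fin (m + 1 + 1)), - H π := Finset.sum_congr rfl fun π _ => h2 π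
        _ = - ∑ π : Perm (Fin (m + 1 + 1)), H π := Finset.sum_neg_distrib _
    have h4 : (2 : MvPolynomial (Fin (m + 1 + 1)) F) * ∑ π : Perm (Fin (m + 1 + 1)), H π = 0 := by
      rw [two_mul]; nth_rewrite 1 [h3]; ring
    rcases mul_eq_zero.mp h4 with h | h
    · exact absurd h two_ne_zero
    · exact h
  -- rewrite pderiv of det
  have hdet : ∀ i : Fin (m + 1 + 1),
      pderiv i (Matrix.det (Matrix.of fun (k l : Fin (m + 1)) =>
        pderiv (i.succAbove k) (f l)))
      = ∑ σ : Perm (Fin (m + 1)), ((sign σ : ℤ) : MvPolynomial (Fin (m + 1 + 1)) F) *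
          ∑ l0 : Fin (m + 1), pderiv i (pderiv (i.succAbove (σ l0)) (f l0)) *
            ∏ l ∈ Finset.univ.erase l0, pderiv (i.succAbove (σ l)) (f l) := by
    intro i
    rw [Matrix.det_apply', map_sum]
    refine Finset.sum_congr rfl fun σ _ => ?_
    rw [← zsmul_eq_mul, map_zsmul, pderiv_finset_prod, zsmul_eq_mul]
    rfl
  -- the bijection
  set Φ : Fin (m + 1 + 1) × Perm (Fin (m + 1)) → Perm (Fin (m + 1 + 1)) :=
    fun p => p.1.cycleRange.symm * Equiv.Perm.decomposeFin.symm (0, p.2) with hΦdef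
  have hΦ0 : ∀ i σ, Φ (i, σ) 0 = i := by
    intro i σ
    simp [hΦdef, Equiv.Perm.mul_apply, Equiv.Perm.decomposeFin_symm_apply_zero,
      Fin.cycleRange_symm_zero]
  have hΦs : ∀ i σ (l : Fin (m + 1)), Φ (i, σ) l.succ = i.succAbove (σ l) := by
    intro i σ l
    simp [hΦdef, Equiv.Perm.mul_apply, Equiv.Perm.decomposeFin_symm_apply_succ,
      Fin.cycleRange_symm_succ]
  have hΦsign : ∀ i σ, ((sign (Φ (i, σ)) : ℤ) : MvPolynomial (Fin (m + 1 + 1)) F) = (-1 : MvPolynomial (Fin (m + 1 + 1)) F) ^ (i : ℕ) * ((sign σ : ℤ) : MvPolynomial (Fin (m + 1 + 1)) F) := by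
    intro i σ
    rw [hΦdef]
    simp only [map_mul]
    rw [Equiv.Perm.decomposeFin.symm_sign, if_pos rfl]
    have : sign i.cycleRange.symm = (-1) ^ (i : ℕ) := by
      rw [Equiv.Perm.sign_symm, Fin.sign_cycleRange]
    rw [this]
    push_cast
    ring
  have hbij : Function.Bijective Φ := by
    rw [Fintype.bijective_iff_injective_and_card]
    constructor
    · rintro ⟨i, σ⟩ ⟨j, τ⟩ h
      have hij : i = j := by
        have h0 := congrArg (fun π : Perm (Fin (m + 1 + 1)) => π 0) h
        simpa [hΦ0] using h0
      subst hij
      have h2 : Equiv.Perm.decomposeFin.symm (0, σ) = Equiv.Perm.decomposeFin.symm (0, τ) :=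
        mul_left_cancel h
      have h3 := Equiv.Perm.decomposeFin.symm.injective h2
      simpa using h3
    · simp [Fintype.card_perm, Nat.factorial_succ]
  have hstep1 : ∑ i : Fin (m + 1 + 1), (-1 : MvPolynomial (Fin (m + 1 + 1)) F) ^ ((i : ℕ) + 1) *
        pderiv i (Matrix.det (Matrix.of fun (k l : Fin (m + 1)) =>
          pderiv (i.succAbove k) (f l)))
      = ∑ p : Fin (m + 1 + 1) × Perm (Fin (m + 1)), - G (Φ p) := by
    rw [Fintype.sum_prod_type]
    refine Finset.sum_congr rfl fun i _ => ?_
    rw [hdet, Finset.mul_sum]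
    refine Finset.sum_congr rfl fun σ _ => ?_
    rw [hGdef]
    simp only [hΦ0, hΦs, hΦsign]
    ring
  have hstep2 : ∑ p : Fin (m + 1 + 1) × Perm (Fin (m + 1)), - G (Φ p)
      = ∑ π : Perm (Fin (m + 1 + 1)), - G π :=
    Fintype.sum_bijective Φ hbij _ _ fun p => rfl
  rw [hstep1, hstep2, Finset.sum_neg_distrib, hB, neg_zero]

/-- For `f_1,…,f_{n-1} ∈ F[x_1,…,x_n]`, let `M_i` be the `(n-1)×(n-1)` minor of the
`n×(n-1)` Jacobian matrix `(∂f_l/∂x_k)` obtained by deleting row `i`. Then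
`Σ_{i=1}^n (−1)^i ∂M_i/∂x_i = 0`: the vector field `ad(f_1∧⋯∧f_{n-1})` has zero
divergence, so inner derivations of `S^n` lie in `S_n`. -/
theorem inner_derivation_divergence_free
    (F : Type*) [Field F] [CharZero F] (n : ℕ) (hn : 2 ≤ n)
    (f : Fin (n - 1) → MvPolynomial (Fin n) F) :
    ∑ i : Fin n, (-1 : MvPolynomial (Fin n) F) ^ ((i : ℕ) + 1) *
      pderiv i (Matrix.det (Matrix.of fun (k : Fin (n - 1)) (l : Fin (n - 1)) =>
        pderiv (Fin.cast (by omega : n - 1 + 1 = n)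
          ((Fin.cast (by omega : n = n - 1 + 1) i).succAbove k)) (f l))) = 0 := by
  obtain ⟨m, rfl⟩ : ∃ m, n = m + 1 + 1 := ⟨n - 2, by omega⟩
  exact key F m f
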